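/- Let V be a finite-dimensional vector space over a field, with a direct sum decomposition V = V(1) ⊕ V(2) ⊕ ⋯ ⊕ V(l) and a flag V = F⁰V ⊇ F¹V ⊇ ⋯ ⊇ F^mV = 0 of subspaces, where l, m ≥ 1. Let n = dim V and, for 1 ≤ i ≤ n, let f(i) = max{ k ≥ 0 : i ≤ dim F^kV }. Then there exist bases (x_i)_{1≤i≤n} and (b_i)_{1≤i≤n} of V and an upper triangular n×n matrix S = (s_{ij}) with all diagonal entries equal to 1, such that: (1) for each 1 ≤ i ≤ n there exists 1 ≤ g(i) ≤ l with x_i ∈ V(g(i)); (2) for each 0 ≤ k ≤ m − 1, the vectors b_i with 1 ≤ i ≤ dim F^kV form a basis of F^kV; and (3) for all 1 ≤ i ≤ n, b_i = x_i + Σ_{j>i} s_{ij} x_j, where moreover s_{ij} = 0 unless f(j) < f(i) and g(j) ≠ g(i). -/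

import Mathlib

open Module Submodule

section Helpers

lemma card_help (n a t : ℕ) (ht : t ≤ n) :
    Fintype.card {i : Fin n // a ≤ (i : ℕ) ∧ (i : ℕ) < t} = t - a := by
  rw [Fintype.card_subtype]
  rw [← Nat.card_Ico a t]
  apply Finset.card_nbij (fun i : Fin n => (i : ℕ))
  · intro x hx
    simp only [Finset.mem_coe, Finset.mem_filter] at hx
    simp [Finset.mem_Ico, hx.2.1, hx.2.2]
  · intro x _ y _ hxy
    exact Fin.val_injective hxy
  · intro x hx
    simp only [Finset.coe_Ico, Set.mem_Ico] at hx
    exact ⟨⟨x, lt_of_lt_of_le hx.2 ht⟩, by simp [hx.1, hx.2], rfl⟩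

lemma card_help2 (n a : ℕ) :
    Fintype.card {i : Fin n // a ≤ (i : ℕ)} = n - a := by
  rw [Fintype.card_subtype]
  rw [← Nat.card_Ico a n]
  apply Finset.card_nbij (fun i : Fin n => (i : ℕ))
  · intro x hx
    simp only [Finset.mem_coe, Finset.mem_filter] at hx
    simp [Finset.mem_Ico, hx.2, x.isLt]
  · intro x _ y _ hxy
    exact Fin.val_injective hxy
  · intro x hx
    simp only [Finset.coe_Ico, Set.mem_Ico] at hx
    exact ⟨⟨x, hx.2⟩, by simp [hx.1], rfl⟩

lemma card_help3 (n t : ℕ) (ht : t ≤ n) :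
    Fintype.card {i : Fin n // (i : ℕ) < t} = t := by
  have h := card_help n 0 t ht
  rw [Fintype.card_congr (Equiv.subtypeEquivRight (q := fun i : Fin n => 0 ≤ (i:ℕ) ∧ (i:ℕ) < t) (fun i => by simp))]
  simpa using h

variable {𝕜 : Type*} [Field 𝕜] {V : Type*} [AddCommGroup V] [Module 𝕜 V]

lemma mem_spanP_iff {n : ℕ} (x : Fin n → V) (P : Fin n → Prop) (u : V) :
    u ∈ Submodule.span 𝕜 (x '' {j | P j}) ↔
      ∃ c : Fin n → 𝕜, (∀ j, ¬ P j → c j = 0) ∧ ∑ j, c j • x j = u := by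
  classical
  constructor
  · intro hu
    induction hu using Submodule.span_induction with
    | mem v hv =>
      obtain ⟨j, hj, rfl⟩ := hv
      refine ⟨fun j' => if j' = j then 1 else 0, fun j' hj' => ?_, ?_⟩
      · by_cases h : j' = j
        · subst h; exact absurd hj hj'
        · simp [h]
      · simp [Finset.sum_ite_eq']
    | zero => exact ⟨0, fun _ _ => rfl, by simp⟩
    | add v w hv hw ihv ihw =>
      obtain ⟨c1, h1, h1s⟩ := ihv
      obtain ⟨c2, h2, h2s⟩ := ihw
      exact ⟨c1 + c2, fun j hj => by simp [h1 j hj, h2 j hj],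
        by simp [add_smul, Finset.sum_add_distrib, h1s, h2s]⟩
    | smul a v hv ih =>
      obtain ⟨c, h1, h2⟩ := ih
      refine ⟨a • c, fun j hj => by simp [h1 j hj], ?_⟩
      simp only [Pi.smul_apply, smul_eq_mul, ← smul_smul, ← Finset.smul_sum, h2]
  · rintro ⟨c, hc, rfl⟩
    apply Submodule.sum_mem
    intro j _
    by_cases h : P j
    · exact Submodule.smul_mem _ _ (Submodule.subset_span ⟨j, h, rfl⟩)
    · simp [hc j h]

/-- convert a full sum to a subtype sum when coefficients vanish off the predicate -/
lemma sum_eq_subtype_sum {n : ℕ} (u : Fin n → V) (P : Fin n → Prop) [DecidablePred P]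
    (hu : ∀ j, ¬ P j → u j = 0) :
    ∑ j, u j = ∑ j : {j : Fin n // P j}, u ↑j := by
  classical
  rw [← Finset.sum_filter_add_sum_filter_not Finset.univ P u]
  rw [Finset.sum_subtype (p := P) (Finset.univ.filter P) (by simp) u]
  have : ∑ j ∈ Finset.univ.filter (fun j => ¬ P j), u j = 0 :=
    Finset.sum_eq_zero (fun j hj => hu j (Finset.mem_filter.mp hj).2)
  rw [this, add_zero]

end Helpers

/-- Let `V` be a finite-dimensional vector space with a direct sum decomposition
`V = V(1) ⊕ ⋯ ⊕ V(l)` and a flag `V = F⁰V ⊇ F¹V ⊇ ⋯ ⊇ F^mV = 0`. Let `n = dim V` and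
`f(i) = max{k : i ≤ dim F^kV}`. Then there exist bases `(x_i)` and `(b_i)` of `V` and an upper
triangular matrix `S` with diagonal `1` such that: (1) each `x_i` is in some `V(g(i))`;
(2) for `0 ≤ K ≤ m−1` the `b_i` with `i ≤ dim F^KV` form a basis of `F^KV`; and
(3) `b_i = x_i + Σ_{j>i} s_{ij} x_j` where `s_{ij} = 0` unless `f(j) < f(i)` and
`g(j) ≠ g(i)`. -/
theorem stmt17 {𝕜 : Type*} [Field 𝕜] {V : Type*} [AddCommGroup V] [Module 𝕜 V]
    [FiniteDimensional 𝕜 V]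
    (l m : ℕ) (hl : 1 ≤ l) (hm : 1 ≤ m)
    (W : Fin l → Submodule 𝕜 V) (hW : DirectSum.IsInternal W)
    (F : ℕ → Submodule 𝕜 V) (hF0 : F 0 = ⊤) (hFdec : Antitone F) (hFm : F m = ⊥)
    (n : ℕ) (hn : n = Module.finrank 𝕜 V)
    (f : Fin n → ℕ)
    (hf : ∀ i : Fin n, f i = sSup {K : ℕ | (i : ℕ) + 1 ≤ Module.finrank 𝕜 (F K)}) :
    ∃ (x b : Basis (Fin n) 𝕜 V) (S : Matrix (Fin n) (Fin n) 𝕜) (g : Fin n → Fin l),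
      (∀ i, S i i = 1) ∧
      (∀ i j, j < i → S i j = 0) ∧
      (∀ i, x i ∈ W (g i)) ∧
      (∀ K : ℕ, K < m →
        F K = Submodule.span 𝕜
          {v : V | ∃ i : Fin n, (i : ℕ) < Module.finrank 𝕜 (F K) ∧ v = b i}) ∧
      (∀ i, b i = ∑ j, S i j • x j) ∧
      (∀ i j, i < j → S i j ≠ 0 → f j < f i ∧ g j ≠ g i) := by
  classical
  set d : ℕ → ℕ := fun k => Module.finrank 𝕜 (F k) with hd
  have hdmono : ∀ {k1 k2 : ℕ}, k1 ≤ k2 → d k2 ≤ d k1 :=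
    fun h => Submodule.finrank_mono (hFdec h)
  have hd0 : d 0 = n := by
    show Module.finrank 𝕜 (F 0) = n
    rw [hF0, hn]
    exact finrank_top 𝕜 V
  have hdm : d m = 0 := by
    show Module.finrank 𝕜 (F m) = 0
    rw [hFm]
    exact finrank_bot 𝕜 V
  have hdn : ∀ k, d k ≤ n := fun k => hd0 ▸ hdmono (Nat.zero_le k)
  -- characterization of f
  have hfk : ∀ (i : Fin n) (K : ℕ), (i : ℕ) < d K ↔ K ≤ f i := by
    intro i K
    have hbd : BddAbove {K : ℕ | (i : ℕ) + 1 ≤ d K} := by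
      refine ⟨m, fun K hK => ?_⟩
      by_contra hKm
      push_neg at hKm
      have : d K ≤ d m := hdmono (le_of_lt hKm)
      rw [hdm] at this
      simp only [Set.mem_setOf_eq] at hK
      omega
    have hne : Set.Nonempty {K : ℕ | (i : ℕ) + 1 ≤ d K} :=
      ⟨0, by simp only [Set.mem_setOf_eq, hd0]; exact i.isLt⟩
    constructor
    · intro h
      rw [hf i]
      exact le_csSup hbd (by simpa using h)
    · intro h
      have hmem : f i ∈ {K : ℕ | (i : ℕ) + 1 ≤ d K} := by
        rw [hf i]
        exact Nat.sSup_mem hne hbd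
      simp only [Set.mem_setOf_eq] at hmem
      have := hdmono h
      omega
  have hfi_lt : ∀ i : Fin n, (i : ℕ) < d (f i) := fun i => (hfk i (f i)).mpr le_rfl
  have hflt_iff : ∀ i j : Fin n, f j < f i ↔ d (f i) ≤ (j : ℕ) := by
    intro i j
    rw [← not_lt, ← not_le]
    exact not_congr (hfk j (f i)).symm
  -- the main induction
  have key : ∀ k, k ≤ m →
      ∃ (x : Fin n → V) (g : Fin n → Fin l) (c : Fin n → V),
        (∀ j : Fin n, d k ≤ (j : ℕ) → x j ∈ W (g j)) ∧
        (∀ j : Fin n, d k ≤ (j : ℕ) → c j ∈ F (f j)) ∧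
        (∀ j : Fin n, d k ≤ (j : ℕ) →
          c j - x j ∈ Submodule.span 𝕜
            (x '' {j' : Fin n | d (f j) ≤ (j' : ℕ) ∧ g j' ≠ g j})) ∧
        (∀ a : Fin n → 𝕜, (∀ j : Fin n, (j : ℕ) < d k → a j = 0) →
          ∑ j, a j • x j = 0 → ∀ j, a j = 0) ∧
        Disjoint (F k) (Submodule.span 𝕜 (x '' {j : Fin n | d k ≤ (j : ℕ)})) ∧
        Codisjoint (F k) (Submodule.span 𝕜 (x '' {j : Fin n | d k ≤ (j : ℕ)})) := by
    intro k
    induction k with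
    | zero =>
      intro _
      have hempty : {j : Fin n | d 0 ≤ (j : ℕ)} = ∅ := by
        ext j
        simp only [Set.mem_setOf_eq, Set.mem_empty_iff_false, iff_false, not_le, hd0]
        exact j.isLt
      refine ⟨fun _ => 0, fun _ => ⟨0, hl⟩, fun _ => 0, ?_, ?_, ?_, ?_, ?_, ?_⟩
      · intro j hj; rw [hd0] at hj; exact absurd j.isLt (not_lt.mpr hj)
      · intro j hj; rw [hd0] at hj; exact absurd j.isLt (not_lt.mpr hj)
      · intro j hj; rw [hd0] at hj; exact absurd j.isLt (not_lt.mpr hj)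
      · intro a ha _ j
        exact ha j (hd0 ▸ j.isLt)
      · rw [hempty]
        simp
      · rw [hempty]
        simp only [Set.image_empty, Submodule.span_empty]
        rw [codisjoint_iff, hF0]
        simp
    | succ k ih =>
      intro hk1
      have hkm : k < m := hk1
      obtain ⟨x, g, c, hxW, hcF, hcx, hind, hdisj, hcodisj⟩ := ih (le_of_lt hkm)
      have hdk_le : d (k+1) ≤ d k := hdmono (Nat.le_succ k)
      set X : Submodule 𝕜 V := Submodule.span 𝕜 (x '' {j : Fin n | d k ≤ (j : ℕ)}) with hXdef
      set Y : Submodule 𝕜 V := X ⊔ F (k+1) with hYdef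
      have hXY : X ≤ Y := le_sup_left
      have hFY : F (k+1) ≤ Y := le_sup_right
      -- homogeneous vectors span V, hence the quotient
      have hHspan : Submodule.span 𝕜 (⋃ g', (W g' : Set V)) = ⊤ := by
        rw [Submodule.span_iUnion]
        simp only [Submodule.span_eq]
        exact hW.submodule_iSup_eq_top
      have hQspan : Submodule.span 𝕜 (Y.mkQ '' (⋃ g', (W g' : Set V))) = ⊤ := by
        rw [← Submodule.map_span, hHspan, Submodule.map_top, Submodule.range_mkQ]
      obtain ⟨s, hsH, hs_span, hs_li⟩ :=
        exists_linearIndependent 𝕜 (Y.mkQ '' (⋃ g', (W g' : Set V)))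
      rw [hQspan] at hs_span
      have hs_fin : s.Finite := hs_li.setFinite
      haveI : Fintype s := hs_fin.fintype
      -- old part is linearly independent
      have hxli_old : LinearIndependent 𝕜 (fun j : {j : Fin n // d k ≤ (j : ℕ)} => x ↑j) := by
        rw [Fintype.linearIndependent_iff]
        intro cc hcc
        set a : Fin n → 𝕜 := fun j => if h : d k ≤ (j : ℕ) then cc ⟨j, h⟩ else 0 with ha
        have hsuma : ∑ j, a j • x j = ∑ j : {j : Fin n // d k ≤ (j : ℕ)}, cc j • x ↑j := by
          rw [sum_eq_subtype_sum (fun j => a j • x j) (fun j => d k ≤ (j : ℕ))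
            (fun j hj => by simp [ha, dif_neg hj])]
          exact Finset.sum_congr rfl (fun j _ => by simp [ha, dif_pos j.2])
        have h0 : ∀ j', a j' = 0 :=
          hind a (fun j' hj' => by simp [ha, dif_neg (by omega : ¬ d k ≤ (j' : ℕ))])
            (by rw [hsuma, hcc])
        intro j
        have := h0 ↑j
        simpa [ha, dif_pos j.2] using this
      -- dimension counting
      have hXrank : finrank 𝕜 X = n - d k := by
        rw [hXdef, Set.image_eq_range]
        exact (finrank_span_eq_card hxli_old).trans (card_help2 n (d k))
      have hXFbot : X ⊓ F (k+1) = ⊥ := by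
        rw [eq_bot_iff]
        intro u hu
        have h1 : u ∈ F k := hFdec (Nat.le_succ k) hu.2
        have := Submodule.disjoint_def.mp hdisj u h1 hu.1
        simp [this]
      have hYr : finrank 𝕜 Y = (n - d k) + d (k+1) := by
        have h1 := Submodule.finrank_sup_add_finrank_inf_eq X (F (k+1))
        rw [hXFbot] at h1
        simp only [finrank_bot] at h1
        have e1 : Module.finrank 𝕜 (F (k+1)) = d (k+1) := rfl
        rw [hYdef] at *
        rw [e1] at h1
        omega
      have hQr : finrank 𝕜 (V ⧸ Y) + finrank 𝕜 Y = n := by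
        rw [Submodule.finrank_quotient_add_finrank Y, hn]
      have hQrank : finrank 𝕜 (V ⧸ Y) = d k - d (k+1) := by
        have := hdn k
        omega
      have hscard : Fintype.card s = d k - d (k+1) := by
        have h1 := finrank_span_set_eq_card (s := s) hs_li
        rw [hs_span, finrank_top, hQrank, Set.toFinset_card] at h1
        omega
      have hMcard : Fintype.card {j : Fin n // d (k+1) ≤ (j : ℕ) ∧ (j : ℕ) < d k}
          = Fintype.card s := by
        rw [card_help n (d (k+1)) (d k) (hdn k), hscard]
      set eM := Fintype.equivOfCardEq hMcard with heM
      set q : {j : Fin n // d (k+1) ≤ (j : ℕ) ∧ (j : ℕ) < d k} → V ⧸ Y :=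
        fun j => ↑(eM j) with hq
      have hq_li : LinearIndependent 𝕜 q := hs_li.comp (fun j => eM j) eM.injective
      have hq_range : Set.range q = s := by
        ext w
        constructor
        · rintro ⟨j, rfl⟩
          exact (eM j).2
        · intro hw
          exact ⟨eM.symm ⟨w, hw⟩, by simp [hq]⟩
      -- choose homogeneous preimages
      have hpre : ∀ j : {j : Fin n // d (k+1) ≤ (j : ℕ) ∧ (j : ℕ) < d k},
          ∃ vv : V, (∃ g', vv ∈ W g') ∧ Y.mkQ vv = q j := by
        intro j
        obtain ⟨vv, hvH, hveq⟩ := hsH (eM j).2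
        simp only [Set.mem_iUnion, SetLike.mem_coe] at hvH
        exact ⟨vv, hvH, hveq⟩
      choose v hvW hvq using hpre
      choose gv hgv using hvW
      -- decompose each v j along F k ⊔ X = ⊤
      have htop : F k ⊔ X = ⊤ := codisjoint_iff.mp hcodisj
      have hvmem : ∀ j : {j : Fin n // d (k+1) ≤ (j : ℕ) ∧ (j : ℕ) < d k},
          ∃ yy ∈ F k, ∃ zz ∈ X, yy + zz = v j := by
        intro j
        exact Submodule.mem_sup.mp (by rw [htop]; trivial)
      choose yv hyF zv hzX hyz using hvmem
      have hzco : ∀ j : {j : Fin n // d (k+1) ≤ (j : ℕ) ∧ (j : ℕ) < d k},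
          ∃ a : Fin n → 𝕜, (∀ j' : Fin n, ¬ d k ≤ (j' : ℕ) → a j' = 0) ∧
            ∑ j', a j' • x j' = zv j :=
        fun j => (mem_spanP_iff x _ _).mp (hzX j)
      choose az haz hazsum using hzco
      -- split coefficients by grade
      set asame : {j : Fin n // d (k+1) ≤ (j : ℕ) ∧ (j : ℕ) < d k} → Fin n → 𝕜 :=
        fun j j' => if g j' = gv j then az j j' else 0 with hasame
      set adiff : {j : Fin n // d (k+1) ≤ (j : ℕ) ∧ (j : ℕ) < d k} → Fin n → 𝕜 :=
        fun j j' => if g j' = gv j then 0 else az j j' with hadiff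
      have haz_split : ∀ j j', az j j' = asame j j' + adiff j j' := by
        intro j j'
        by_cases h : g j' = gv j <;> simp [hasame, hadiff, h]
      set xnew : {j : Fin n // d (k+1) ≤ (j : ℕ) ∧ (j : ℕ) < d k} → V :=
        fun j => v j - ∑ j', asame j j' • x j' with hxnew
      have hxnewW : ∀ j, xnew j ∈ W (gv j) := by
        intro j
        refine sub_mem (hgv j) (Submodule.sum_mem _ (fun j' _ => ?_))
        by_cases hgj : g j' = gv j
        · by_cases hdj : d k ≤ (j' : ℕ)
          · rw [hasame]
            simp only [hgj, if_true]
            exact Submodule.smul_mem _ _ (hgj ▸ hxW j' hdj)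
          · simp [hasame, haz j j' hdj]
        · simp [hasame, hgj]
      have hsame_memX : ∀ j, ∑ j', asame j j' • x j' ∈ X := by
        intro j
        refine Submodule.sum_mem _ (fun j' _ => ?_)
        by_cases hdj : d k ≤ (j' : ℕ)
        · exact Submodule.smul_mem _ _ (Submodule.subset_span ⟨j', hdj, rfl⟩)
        · have h0 : az j j' = 0 := haz j j' hdj
          simp [hasame, h0]
      have hdiff_mem : ∀ j, yv j - xnew j ∈
          Submodule.span 𝕜 (x '' {j' : Fin n | d k ≤ (j' : ℕ) ∧ g j' ≠ gv j}) := by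
        intro j
        rw [mem_spanP_iff]
        refine ⟨fun j' => - adiff j j', fun j' hj' => ?_, ?_⟩
        · by_cases hdj : d k ≤ (j' : ℕ)
          · have hgj : g j' = gv j := by
              by_contra hgg
              exact hj' ⟨hdj, hgg⟩
            simp [hadiff, hgj]
          · simp [hadiff, haz j j' hdj]
        · have hco : ∀ j', (-adiff j j' : 𝕜) = asame j j' - az j j' := by
            intro j'
            rw [haz_split j j']
            ring
          have h5 : yv j = v j - zv j := eq_sub_of_add_eq (hyz j)
          calc ∑ j', (- adiff j j') • x j'
              = ∑ j', (asame j j' • x j' - az j j' • x j') :=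
                Finset.sum_congr rfl (fun j' _ => by rw [← sub_smul, ← hco j'])
            _ = (∑ j', asame j j' • x j') - (∑ j', az j j' • x j') :=
                Finset.sum_sub_distrib _ _
            _ = (∑ j', asame j j' • x j') - zv j := by rw [hazsum j]
            _ = yv j - xnew j := by rw [hxnew, h5]; exact (sub_sub_sub_cancel_left _ _ _).symm
      have hpix : ∀ j, Y.mkQ (xnew j) = q j := by
        intro j
        have h2 : Y.mkQ (∑ j', asame j j' • x j') = 0 := by
          rw [Submodule.mkQ_apply, Submodule.Quotient.mk_eq_zero]
          exact hXY (hsame_memX j)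
        rw [hxnew]
        simp only [map_sub, h2, sub_zero, hvq j]
      -- total families
      set xt : Fin n → V := fun j =>
        if h : d k ≤ (j : ℕ) then x j
        else if h2 : d (k+1) ≤ (j : ℕ) then xnew ⟨j, h2, lt_of_not_ge h⟩ else 0 with hxt
      set gt : Fin n → Fin l := fun j =>
        if h : d k ≤ (j : ℕ) then g j
        else if h2 : d (k+1) ≤ (j : ℕ) then gv ⟨j, h2, lt_of_not_ge h⟩ else ⟨0, hl⟩ with hgt
      set ct : Fin n → V := fun j =>
        if h : d k ≤ (j : ℕ) then c j
        else if h2 : d (k+1) ≤ (j : ℕ) then yv ⟨j, h2, lt_of_not_ge h⟩ else 0 with hct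
      have hxt_old : ∀ j : Fin n, d k ≤ (j : ℕ) → xt j = x j := fun j h => dif_pos h
      have hgt_old : ∀ j : Fin n, d k ≤ (j : ℕ) → gt j = g j := fun j h => dif_pos h
      have hct_old : ∀ j : Fin n, d k ≤ (j : ℕ) → ct j = c j := fun j h => dif_pos h
      have hxt_mid : ∀ (j : Fin n) (h2 : d (k+1) ≤ (j : ℕ)) (hlt : (j : ℕ) < d k),
          xt j = xnew ⟨j, h2, hlt⟩ := by
        intro j h2 hlt
        have h : ¬ d k ≤ (j : ℕ) := by omega
        rw [hxt]
        simp only [dif_neg h, dif_pos h2]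
      have hgt_mid : ∀ (j : Fin n) (h2 : d (k+1) ≤ (j : ℕ)) (hlt : (j : ℕ) < d k),
          gt j = gv ⟨j, h2, hlt⟩ := by
        intro j h2 hlt
        have h : ¬ d k ≤ (j : ℕ) := by omega
        rw [hgt]
        simp only [dif_neg h, dif_pos h2]
      have hct_mid : ∀ (j : Fin n) (h2 : d (k+1) ≤ (j : ℕ)) (hlt : (j : ℕ) < d k),
          ct j = yv ⟨j, h2, hlt⟩ := by
        intro j h2 hlt
        have h : ¬ d k ≤ (j : ℕ) := by omega
        rw [hct]
        simp only [dif_neg h, dif_pos h2]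
      have hfmid : ∀ (j : Fin n), d (k+1) ≤ (j : ℕ) → (j : ℕ) < d k → f j = k := by
        intro j h2 hlt
        have h3 : k ≤ f j := (hfk j k).mp hlt
        have h4 : ¬ ((j : ℕ) < d (k+1)) := by omega
        have h5 : ¬ (k + 1 ≤ f j) := fun hc => h4 ((hfk j (k+1)).mpr hc)
        omega
      have hfold : ∀ (j : Fin n), d k ≤ (j : ℕ) → f j < k := by
        intro j h
        have h4 : ¬ ((j : ℕ) < d k) := by omega
        have h5 : ¬ (k ≤ f j) := fun hc => h4 ((hfk j k).mpr hc)
        omega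
      have himg_old : ∀ (A : Set (Fin n)), (∀ j ∈ A, d k ≤ (j : ℕ)) →
          xt '' A = x '' A := by
        intro A hA
        exact Set.image_congr (fun j hj => hxt_old j (hA j hj))
      -- triple sum splitting
      have tri : ∀ (u : Fin n → V), ∑ j, u j
          = (∑ j : {j : Fin n // d k ≤ (j : ℕ)}, u ↑j)
          + ((∑ j : {j : Fin n // d (k+1) ≤ (j : ℕ) ∧ (j : ℕ) < d k}, u ↑j)
          + (∑ j : {j : Fin n // (j : ℕ) < d (k+1)}, u ↑j)) := by
        intro u
        rw [← Finset.sum_filter_add_sum_filter_not Finset.univ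
          (fun j : Fin n => d k ≤ (j : ℕ)) u]
        congr 1
        · exact Finset.sum_subtype _ (by simp) u
        · rw [← Finset.sum_filter_add_sum_filter_not
            (Finset.univ.filter (fun j : Fin n => ¬ d k ≤ (j : ℕ)))
            (fun j : Fin n => d (k+1) ≤ (j : ℕ)) u]
          congr 1
          · rw [Finset.filter_filter]
            refine Finset.sum_subtype _ (fun j => ?_) u
            simp only [Finset.mem_filter, Finset.mem_univ, true_and, not_le]
            omega
          · rw [Finset.filter_filter]
            refine Finset.sum_subtype _ (fun j => ?_) u
            simp only [Finset.mem_filter, Finset.mem_univ, true_and, not_le]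
            omega
      -- a reusable analysis of combinations of xt
      have main_split : ∀ a : Fin n → 𝕜, (∀ j : Fin n, (j : ℕ) < d (k+1) → a j = 0) →
          ∑ j, a j • xt j
            = (∑ j : {j : Fin n // d k ≤ (j : ℕ)}, a ↑j • x ↑j)
            + (∑ j : {j : Fin n // d (k+1) ≤ (j : ℕ) ∧ (j : ℕ) < d k}, a ↑j • xnew j) := by
        intro a ha
        rw [tri (fun j => a j • xt j)]
        have e1 : ∀ j : {j : Fin n // d k ≤ (j : ℕ)}, a ↑j • xt ↑j = a ↑j • x ↑j :=
          fun j => by rw [hxt_old ↑j j.2]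
        have e2 : ∀ j : {j : Fin n // d (k+1) ≤ (j : ℕ) ∧ (j : ℕ) < d k},
            a ↑j • xt ↑j = a ↑j • xnew j := by
          intro j
          rw [hxt_mid ↑j j.2.1 j.2.2]
        have e3 : ∀ j : {j : Fin n // (j : ℕ) < d (k+1)}, a ↑j • xt ↑j = 0 :=
          fun j => by rw [ha ↑j j.2, zero_smul]
        rw [Finset.sum_congr rfl (fun j _ => e1 j), Finset.sum_congr rfl (fun j _ => e2 j),
          Finset.sum_congr rfl (fun j _ => e3 j)]
        simp
      have mkQ_old_sum : ∀ a : Fin n → 𝕜,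
          Y.mkQ (∑ j : {j : Fin n // d k ≤ (j : ℕ)}, a ↑j • x ↑j) = 0 := by
        intro a
        rw [Submodule.mkQ_apply, Submodule.Quotient.mk_eq_zero]
        exact hXY (Submodule.sum_mem _ (fun j _ =>
          Submodule.smul_mem _ _ (Submodule.subset_span ⟨↑j, j.2, rfl⟩)))
      have mkQ_mid_sum : ∀ a : Fin n → 𝕜,
          Y.mkQ (∑ j : {j : Fin n // d (k+1) ≤ (j : ℕ) ∧ (j : ℕ) < d k}, a ↑j • xnew j)
            = ∑ j : {j : Fin n // d (k+1) ≤ (j : ℕ) ∧ (j : ℕ) < d k}, a ↑j • q j := by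
        intro a
        rw [map_sum]
        exact Finset.sum_congr rfl (fun j _ => by rw [map_smul, hpix j])
      have old_sum_memX : ∀ a : Fin n → 𝕜,
          (∑ j : {j : Fin n // d k ≤ (j : ℕ)}, a ↑j • x ↑j) ∈ X :=
        fun a => Submodule.sum_mem _ (fun j _ =>
          Submodule.smul_mem _ _ (Submodule.subset_span ⟨↑j, j.2, rfl⟩))
      -- now the six conjuncts
      refine ⟨xt, gt, ct, ?_, ?_, ?_, ?_, ?_, ?_⟩
      · intro j hj
        by_cases h : d k ≤ (j : ℕ)
        · rw [hxt_old j h, hgt_old j h]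
          exact hxW j h
        · have hlt : (j : ℕ) < d k := by omega
          rw [hxt_mid j hj hlt, hgt_mid j hj hlt]
          exact hxnewW ⟨j, hj, hlt⟩
      · intro j hj
        by_cases h : d k ≤ (j : ℕ)
        · rw [hct_old j h]
          exact hcF j h
        · have hlt : (j : ℕ) < d k := by omega
          rw [hct_mid j hj hlt, hfmid j hj hlt]
          exact hyF ⟨j, hj, hlt⟩
      · intro j hj
        by_cases h : d k ≤ (j : ℕ)
        · -- old index: transfer from ih
          have hfj : f j < k := hfold j h
          have hsub : ∀ j' : Fin n, d (f j) ≤ (j' : ℕ) → d k ≤ (j' : ℕ) :=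
            fun j' hj' => le_trans (hdmono (le_of_lt hfj)) hj'
          have hseteq : {j' : Fin n | d (f j) ≤ (j' : ℕ) ∧ gt j' ≠ gt j}
              = {j' : Fin n | d (f j) ≤ (j' : ℕ) ∧ g j' ≠ g j} := by
            ext j'
            simp only [Set.mem_setOf_eq]
            constructor
            · rintro ⟨h1, h2⟩
              rw [hgt_old j' (hsub j' h1), hgt_old j h] at h2
              exact ⟨h1, h2⟩
            · rintro ⟨h1, h2⟩
              rw [← hgt_old j' (hsub j' h1), ← hgt_old j h] at h2
              exact ⟨h1, h2⟩
          rw [hct_old j h, hxt_old j h, hseteq,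
            himg_old _ (fun j' hj' => hsub j' hj'.1)]
          exact hcx j h
        · have hlt : (j : ℕ) < d k := by omega
          have hfj : f j = k := hfmid j hj hlt
          have hseteq : {j' : Fin n | d (f j) ≤ (j' : ℕ) ∧ gt j' ≠ gt j}
              = {j' : Fin n | d k ≤ (j' : ℕ) ∧ g j' ≠ gv ⟨j, hj, hlt⟩} := by
            ext j'
            simp only [Set.mem_setOf_eq, hfj]
            constructor
            · rintro ⟨h1, h2⟩
              rw [hgt_old j' h1, hgt_mid j hj hlt] at h2
              exact ⟨h1, h2⟩
            · rintro ⟨h1, h2⟩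
              rw [← hgt_old j' h1, ← hgt_mid j hj hlt] at h2
              exact ⟨h1, h2⟩
          rw [hct_mid j hj hlt, hxt_mid j hj hlt, hseteq,
            himg_old _ (fun j' hj' => hj'.1)]
          exact hdiff_mem ⟨j, hj, hlt⟩
      · -- linear independence
        intro a ha hsum0
        rw [main_split a ha] at hsum0
        have hq0 : ∑ j : {j : Fin n // d (k+1) ≤ (j : ℕ) ∧ (j : ℕ) < d k}, a ↑j • q j = 0 := by
          have := congrArg Y.mkQ hsum0
          rw [map_add, mkQ_old_sum a, mkQ_mid_sum a, map_zero, zero_add] at this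
          exact this
        have hmid0 : ∀ j : {j : Fin n // d (k+1) ≤ (j : ℕ) ∧ (j : ℕ) < d k}, a ↑j = 0 :=
          Fintype.linearIndependent_iff.mp hq_li _ hq0
        have hmidsum : ∑ j : {j : Fin n // d (k+1) ≤ (j : ℕ) ∧ (j : ℕ) < d k},
            a ↑j • xnew j = 0 :=
          Finset.sum_eq_zero (fun j _ => by rw [hmid0 j, zero_smul])
        rw [hmidsum, add_zero] at hsum0
        set a' : Fin n → 𝕜 := fun j => if d k ≤ (j : ℕ) then a j else 0 with ha'
        have hsuma' : ∑ j, a' j • x j = ∑ j : {j : Fin n // d k ≤ (j : ℕ)}, a ↑j • x ↑j := by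
          rw [sum_eq_subtype_sum (fun j => a' j • x j) (fun j => d k ≤ (j : ℕ))
            (fun j hj => by simp [ha', hj])]
          exact Finset.sum_congr rfl (fun j _ => by simp [ha', j.2])
        have hold0 : ∀ j, a' j = 0 :=
          hind a' (fun j hj => by rw [ha']; simp only [if_neg (show ¬ d k ≤ (j : ℕ) by omega)])
            (by rw [hsuma', hsum0])
        intro j
        by_cases h : d k ≤ (j : ℕ)
        · have := hold0 j
          simpa [ha', h] using this
        · by_cases h2 : d (k+1) ≤ (j : ℕ)
          · exact hmid0 ⟨j, h2, by omega⟩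
          · exact ha j (by omega)
      · -- Disjoint
        rw [Submodule.disjoint_def]
        intro u huF huX'
        obtain ⟨a, ha0, hasum⟩ := (mem_spanP_iff xt _ u).mp huX'
        have ha0' : ∀ j : Fin n, (j : ℕ) < d (k+1) → a j = 0 :=
          fun j hj => ha0 j (by omega)
        rw [main_split a ha0'] at hasum
        have hq0 : ∑ j : {j : Fin n // d (k+1) ≤ (j : ℕ) ∧ (j : ℕ) < d k}, a ↑j • q j = 0 := by
          have h1 : Y.mkQ u = 0 := by
            rw [Submodule.mkQ_apply, Submodule.Quotient.mk_eq_zero]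
            exact hFY huF
          have := congrArg Y.mkQ hasum
          rw [map_add, mkQ_old_sum a, mkQ_mid_sum a, h1, zero_add] at this
          exact this
        have hmid0 : ∀ j : {j : Fin n // d (k+1) ≤ (j : ℕ) ∧ (j : ℕ) < d k}, a ↑j = 0 :=
          Fintype.linearIndependent_iff.mp hq_li _ hq0
        have hmidsum : ∑ j : {j : Fin n // d (k+1) ≤ (j : ℕ) ∧ (j : ℕ) < d k},
            a ↑j • xnew j = 0 :=
          Finset.sum_eq_zero (fun j _ => by rw [hmid0 j, zero_smul])
        rw [hmidsum, add_zero] at hasum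
        have huX : u ∈ X := by
          rw [← hasum]
          exact old_sum_memX a
        exact Submodule.disjoint_def.mp hdisj u (hFdec (Nat.le_succ k) huF) huX
      · -- Codisjoint
        rw [codisjoint_iff, eq_top_iff]
        have hXle : X ≤ Submodule.span 𝕜 (xt '' {j : Fin n | d (k+1) ≤ (j : ℕ)}) := by
          rw [hXdef, ← himg_old {j : Fin n | d k ≤ (j : ℕ)} (fun j hj => hj)]
          exact Submodule.span_mono (Set.image_mono (fun j hj => by
            simp only [Set.mem_setOf_eq] at *
            omega))
        have hxnewX' : ∀ j, xnew j ∈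
            Submodule.span 𝕜 (xt '' {j : Fin n | d (k+1) ≤ (j : ℕ)}) := by
          intro j
          exact Submodule.subset_span ⟨↑j, j.2.1, hxt_mid ↑j j.2.1 j.2.2⟩
        have hvX' : ∀ j, v j ∈
            Submodule.span 𝕜 (xt '' {j : Fin n | d (k+1) ≤ (j : ℕ)}) := by
          intro j
          have h1 : xnew j + ∑ j', asame j j' • x j' = v j := by
            rw [hxnew]
            exact sub_add_cancel _ _
          rw [← h1]
          exact Submodule.add_mem _ (hxnewX' j) (hXle (hsame_memX j))
        have hZtop : ⊤ = Submodule.span 𝕜 (Set.range v) ⊔ Y := by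
          have hmap : Submodule.map Y.mkQ (Submodule.span 𝕜 (Set.range v)) = ⊤ := by
            rw [Submodule.map_span]
            have h1 : Y.mkQ '' Set.range v = Set.range q := by
              rw [← Set.range_comp]
              exact congrArg _ (funext (fun j => hvq j))
            rw [h1, hq_range, hs_span]
          have h2 := Submodule.comap_map_eq Y.mkQ (Submodule.span 𝕜 (Set.range v))
          rw [hmap, Submodule.comap_top, Submodule.ker_mkQ] at h2
          exact h2
        rw [hZtop]
        refine sup_le ?_ ?_
        · rw [Submodule.span_le]
          rintro w ⟨j, rfl⟩
          exact Submodule.mem_sup_right (hvX' j)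
        · rw [hYdef]
          refine sup_le ?_ le_sup_left
          exact le_trans hXle le_sup_right

  -- final assembly
  rcases Nat.eq_zero_or_pos n with hn0 | hnpos
  · -- degenerate case n = 0
    subst hn0
    have hsing : Subsingleton V := by
      rw [← finrank_zero_iff (R := 𝕜)]
      omega
    refine ⟨Basis.empty V, Basis.empty V, 1, Fin.elim0, ?_, ?_, ?_, ?_, ?_, ?_⟩
    · exact fun i => i.elim0
    · exact fun i => i.elim0
    · exact fun i => i.elim0
    · intro K hK
      have h1 : F K = ⊥ := Subsingleton.elim _ _
      have h2 : {v : V | ∃ i : Fin 0, (i : ℕ) < Module.finrank 𝕜 (F K) ∧ v = (Basis.empty V : Basis (Fin 0) 𝕜 V) i} = ∅ := by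
        ext v; simp
      rw [h2, h1]
      simp
    · exact fun i => i.elim0
    · exact fun i => i.elim0
  · obtain ⟨x, g, c, hxW, hcF, hcx, hind, -, -⟩ := key m le_rfl
    have hall : ∀ j : Fin n, d m ≤ (j : ℕ) := fun j => by rw [hdm]; exact Nat.zero_le _
    have hxli : LinearIndependent 𝕜 x := by
      rw [Fintype.linearIndependent_iff]
      intro a ha
      exact hind a (fun j hj => by rw [hdm] at hj; omega) ha
    haveI : Nonempty (Fin n) := ⟨⟨0, hnpos⟩⟩
    have hcard : Fintype.card (Fin n) = finrank 𝕜 V := by simp [hn]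
    set xB : Basis (Fin n) 𝕜 V := basisOfLinearIndependentOfCardEqFinrank hxli hcard with hxBdef
    have hxB : ⇑xB = x := coe_basisOfLinearIndependentOfCardEqFinrank hxli hcard
    -- coefficients
    have hex : ∀ i : Fin n, ∃ e : Fin n → 𝕜,
        (∀ j : Fin n, ¬ (d (f i) ≤ (j : ℕ) ∧ g j ≠ g i) → e j = 0) ∧ ∑ j, e j • x j = c i - x i :=
      fun i => (mem_spanP_iff x _ _).mp (hcx i (hall i))
    choose e he0 hesum using hex
    set S : Matrix (Fin n) (Fin n) 𝕜 := fun (i j : Fin n) => (if j = i then (1 : 𝕜) else 0) + e i j with hS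
    have heii : ∀ i, e i i = 0 := fun i => he0 i i (by
      intro h
      exact absurd (hfi_lt i) (not_lt.mpr h.1))
    have hSii : ∀ i, S i i = 1 := by intro i; simp [hS, heii i]
    have hSoff : ∀ i j, j ≠ i → S i j = e i j := by intro i j h; simp [hS, h]
    have hSnz : ∀ i j, j ≠ i → S i j ≠ 0 → d (f i) ≤ (j : ℕ) ∧ g j ≠ g i := by
      intro i j hne hnz
      rw [hSoff i j hne] at hnz
      by_contra h
      exact hnz (he0 i j h)
    have hlow : ∀ i j : Fin n, j < i → S i j = 0 := by
      intro i j hji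
      by_contra hnz
      have := (hSnz i j (Fin.ne_of_lt hji) hnz).1
      have := hfi_lt i
      have : (i : ℕ) < (j : ℕ) := by omega
      exact absurd (Fin.lt_of_lt_of_le hji le_rfl) (by
        simp only [Fin.lt_def] at *
        omega)
    have hsum : ∀ i, ∑ j, S i j • x j = c i := by
      intro i
      have : ∀ j, S i j • x j = (if j = i then (1:𝕜) else 0) • x j + e i j • x j := by
        intro j; rw [hS]; simp [add_smul]
      simp only [this, Finset.sum_add_distrib]
      rw [hesum i]
      simp [Finset.sum_ite_eq']
    -- b basis via invertible matrix
    have hBT : S.BlockTriangular id := by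
      intro i j hji
      exact hlow i j hji
    have hdet : S.det = 1 := by
      rw [Matrix.det_of_upperTriangular hBT]
      exact Finset.prod_eq_one (fun i _ => hSii i)
    have hdetT : IsUnit (S.transpose).det := by
      rw [Matrix.det_transpose, hdet]
      exact isUnit_one
    set eL : V ≃ₗ[𝕜] V := Matrix.toLinearEquiv xB S.transpose hdetT with heL
    set bB : Basis (Fin n) 𝕜 V := xB.map eL with hbBdef
    have hbB : ∀ i, bB i = c i := by
      intro i
      rw [hbBdef, Basis.map_apply, heL]
      have h1 : (Matrix.toLinearEquiv xB S.transpose hdetT) (xB i)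
          = (Matrix.toLin xB xB S.transpose) (xB i) := by
        simp [Matrix.toLinearEquiv]
      rw [h1, Matrix.toLin_self]
      simp only [Matrix.transpose_apply]
      rw [← hsum i]
      congr 1
      ext j
      rw [hxB]
    refine ⟨xB, bB, S, g, hSii, hlow, ?_, ?_, ?_, ?_⟩
    · intro i
      rw [hxB]
      exact hxW i (hall i)
    · intro K hK
      have hset : {v : V | ∃ i : Fin n, (i : ℕ) < Module.finrank 𝕜 (F K) ∧ v = bB i}
          = Set.range (fun i : {i : Fin n // (i : ℕ) < d K} => bB ↑i) := by
        ext v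
        constructor
        · rintro ⟨i, hi, rfl⟩
          exact ⟨⟨i, hi⟩, rfl⟩
        · rintro ⟨⟨i, hi⟩, rfl⟩
          exact ⟨i, hi, rfl⟩
      rw [hset]
      have hle : Submodule.span 𝕜 (Set.range (fun i : {i : Fin n // (i : ℕ) < d K} => bB ↑i)) ≤ F K := by
        rw [Submodule.span_le]
        rintro v ⟨⟨i, hi⟩, rfl⟩
        have hKfi : K ≤ f i := (hfk i K).mp hi
        have : bB i ∈ F (f i) := by rw [hbB i]; exact hcF i (hall i)
        exact hFdec hKfi this
      have hli : LinearIndependent 𝕜 (fun i : {i : Fin n // (i : ℕ) < d K} => bB ↑i) :=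
        bB.linearIndependent.comp _ Subtype.val_injective
      have hrank : finrank 𝕜 (Submodule.span 𝕜
          (Set.range (fun i : {i : Fin n // (i : ℕ) < d K} => bB ↑i))) = d K := by
        rw [finrank_span_eq_card hli, card_help3 n (d K) (hdn K)]
      exact (Submodule.eq_of_le_of_finrank_le hle (le_of_eq hrank.symm)).symm
    · intro i
      rw [hbB i, ← hsum i]
      congr 1
      ext j
      rw [hxB]
    · intro i j hij hnz
      have h := hSnz i j (by intro h; rw [h] at hij; exact lt_irrefl _ hij) hnz
      exact ⟨(hflt_iff i j).mpr h.1, h.2⟩
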